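/- The polynomial 27x₃² - x₂³ is invariant under the vector field v, i.e., v applied to 27x₃² - x₂³ equals a polynomial multiple of 27x₃² - x₂³; in other words, the hypersurface Δ₁ = {27x₃² - x₂³ = 0} is tangent to the foliation defined by v. -/
import Mathlib


open MvPolynomial

/-- The derivation `v` of ℚ[x₂,x₃,y₂,y₃] (variables `X 0 = x₂`, `X 1 = x₃`,
`X 2 = y₂`, `X 3 = y₃`) with
`v(x₂) = 2x₂ - 6x₃ + (1/6)(x₂-y₂)x₂`,
`v(x₃) = 3x₃ - (1/3)x₂² + (1/4)(x₂-y₂)x₃`,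
`v(y₂) = -(2y₂ - 6y₃ + (1/6)(y₂-x₂)y₂)`,
`v(y₃) = -(3y₃ - (1/3)y₂² + (1/4)(y₂-x₂)y₃)`. -/
noncomputable def vD : Derivation ℚ (MvPolynomial (Fin 4) ℚ) (MvPolynomial (Fin 4) ℚ) :=
  mkDerivation ℚ
    ![2 * X 0 - 6 * X 1 + C (1/6 : ℚ) * (X 0 - X 2) * X 0,
      3 * X 1 - C (1/3 : ℚ) * X 0 ^ 2 + C (1/4 : ℚ) * (X 0 - X 2) * X 1,
      -(2 * X 2 - 6 * X 3 + C (1/6 : ℚ) * (X 2 - X 0) * X 2),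
      -(3 * X 3 - C (1/3 : ℚ) * X 2 ^ 2 + C (1/4 : ℚ) * (X 2 - X 0) * X 3)]

/-- The polynomial `27x₃² - x₂³` is invariant under the vector field `v`:
`v(27x₃² - x₂³)` is a polynomial multiple of `27x₃² - x₂³`, i.e. the
hypersurface `Δ₁ = {27x₃² - x₂³ = 0}` is tangent to the foliation defined by `v`. -/
theorem delta1_invariant :
    ∃ q : MvPolynomial (Fin 4) ℚ,
      vD (27 * X 1 ^ 2 - X 0 ^ 3) = q * (27 * X 1 ^ 2 - X 0 ^ 3) := by
  use 6 + C (1/2 : ℚ) * (X 0 - X 2)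
  have h27 : (27 : MvPolynomial (Fin 4) ℚ) = C (27:ℚ) := by simp [map_ofNat]
  have hC : vD (C (27:ℚ)) = 0 := by
    rw [← MvPolynomial.algebraMap_eq, Derivation.map_algebraMap]
  rw [h27, map_sub, Derivation.leibniz_pow, Derivation.leibniz, Derivation.leibniz_pow, hC]
  simp only [vD, mkDerivation_X, Matrix.cons_val_zero, Matrix.cons_val_one, Matrix.head_cons]
  apply MvPolynomial.funext
  intro x
  simp only [map_add, map_sub, map_mul, map_neg, map_pow, map_smul, eval_X, eval_C,
    map_ofNat, smul_eq_mul, nsmul_eq_mul, smul_zero, map_zero, Nat.cast_ofNat]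
  ring
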